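/- Let F be a finite field of characteristic 2, a ∈ F, and x ∈ F, and set b = x² + x + a. Let ψ : F → {±1} be given by ψ(z) = (−1)^{tr(z)}. Then ∑_{w ∈ F, w ≠ x} ψ(w)·ψ((xw + x + a)/(x + w)) = ∑_{z ∈ F, z ≠ 0} ψ(z + b/z); that is, the adjacency character sum equals a Kloosterman sum. -/
import Mathlib


/-- The absolute trace `tr(x) = x + x² + x⁴ + ⋯ + x^{2^{k-1}}` of a finite field
of order `2^k`, taking values in the prime subfield `{0, 1} ⊆ F`. -/
def fieldTr {F : Type*} [Field F] (k : ℕ) (x : F) : F :=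
  ∑ i ∈ Finset.range k, x ^ (2 ^ i)

/-- The additive character `ψ(z) = (−1)^{tr(z)}`. -/
def psi {F : Type*} [Field F] [DecidableEq F] (k : ℕ) (z : F) : ℤ :=
  if fieldTr k z = 0 then 1 else -1

lemma fieldTr_add {F : Type*} [Field F] [CharP F 2] (k : ℕ) (u v : F) :
    fieldTr k (u + v) = fieldTr k u + fieldTr k v := by
  unfold fieldTr
  rw [← Finset.sum_add_distrib]
  exact Finset.sum_congr rfl fun i _ => add_pow_char_pow ..

lemma fieldTr_sq {F : Type*} [Field F] [Fintype F] [CharP F 2] (k : ℕ)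
    (hcard : Fintype.card F = 2 ^ k) (x : F) : fieldTr k x ^ 2 = fieldTr k x := by
  have hsq : fieldTr k x ^ 2 = ∑ i ∈ Finset.range k, x ^ 2 ^ (i + 1) := by
    unfold fieldTr
    rw [CharTwo.sum_sq]
    exact Finset.sum_congr rfl fun i _ => by rw [← pow_mul, pow_succ]
  have h1 : ∑ i ∈ Finset.range k, x ^ 2 ^ (i + 1) + x ^ 2 ^ 0 =
      ∑ i ∈ Finset.range (k + 1), x ^ 2 ^ i :=
    (Finset.sum_range_succ' (fun i => x ^ 2 ^ i) k).symm
  have h2 : ∑ i ∈ Finset.range (k + 1), x ^ 2 ^ i =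
      ∑ i ∈ Finset.range k, x ^ 2 ^ i + x ^ 2 ^ k := Finset.sum_range_succ _ k
  have h3 : x ^ 2 ^ k = x := by rw [← hcard, FiniteField.pow_card]
  have := h1.trans h2
  rw [h3, pow_zero, pow_one] at this
  have : ∑ i ∈ Finset.range k, x ^ 2 ^ (i + 1) = ∑ i ∈ Finset.range k, x ^ 2 ^ i :=
    add_right_cancel this
  rw [hsq, this]; rfl

lemma fieldTr_zero_or_one {F : Type*} [Field F] [Fintype F] [CharP F 2] (k : ℕ)
    (hcard : Fintype.card F = 2 ^ k) (x : F) : fieldTr k x = 0 ∨ fieldTr k x = 1 := by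
  have h := fieldTr_sq k hcard x
  have : fieldTr k x * (fieldTr k x - 1) = 0 := by ring_nf; linear_combination h
  rcases mul_eq_zero.1 this with h' | h'
  · exact Or.inl h'
  · exact Or.inr (sub_eq_zero.1 h')

lemma psi_mul {F : Type*} [Field F] [Fintype F] [DecidableEq F] [CharP F 2] (k : ℕ)
    (hcard : Fintype.card F = 2 ^ k) (u v : F) :
    psi k u * psi k v = psi k (u + v) := by
  unfold psi
  rw [fieldTr_add]
  rcases fieldTr_zero_or_one k hcard u with hu | hu <;>
    rcases fieldTr_zero_or_one k hcard v with hv | hv <;>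
      simp [hu, hv, CharTwo.add_self_eq_zero]

theorem adjacency_sum_eq_kloosterman
    {F : Type*} [Field F] [Fintype F] [DecidableEq F] [CharP F 2] (k : ℕ)
    (hcard : Fintype.card F = 2 ^ k) (a x : F) :
    ∑ w ∈ Finset.univ.erase x, psi k w * psi k ((x * w + x + a) / (x + w)) =
      ∑ z ∈ Finset.univ.erase (0 : F), psi k (z + (x ^ 2 + x + a) / z) := by
  have h2 : (2 : F) = 0 := CharTwo.two_eq_zero
  apply Finset.sum_nbij' (fun w => x + w) (fun z => x + z)
  · intro w hw
    simp only [Finset.mem_erase, Finset.mem_univ, and_true] at hw ⊢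
    intro h
    exact hw (by rw [CharTwo.add_eq_iff_eq_add] at h; simpa using h.symm)
  · intro z hz
    simp only [Finset.mem_erase, Finset.mem_univ, and_true] at hz ⊢
    intro h
    rw [CharTwo.add_eq_iff_eq_add] at h
    exact hz (by simpa [CharTwo.add_self_eq_zero] using h)
  · intro w _; rw [← add_assoc, CharTwo.add_self_eq_zero, zero_add]
  · intro z _; rw [← add_assoc, CharTwo.add_self_eq_zero, zero_add]
  · intro w hw
    simp only [Finset.mem_erase, Finset.mem_univ, and_true] at hw
    have hz : x + w ≠ 0 := fun h => hw (by
      rw [CharTwo.add_eq_iff_eq_add] at h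
      simpa [CharTwo.add_self_eq_zero] using h.symm)
    rw [psi_mul k hcard]
    congr 1
    field_simp
    linear_combination (-x ^ 2) * h2
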